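/- Let C ⊆ E be measurable with μ₀(C) > 0, let κ ∈ ℝ, and set β_κ = (1−κ)·α_C + κ·α_pool. Then E_{μ₀,C}[‖t−β_κ‖²] ≤ ∫_E ‖t−β_κ‖² dμ₀ holds if and only if (2κ − 1)·‖α_C − α_pool‖² ≤ Tr_{μ₀} − Tr_{μ₀,C}. -/

import Mathlib

open MeasureTheory

private lemma int_sq {L : ℕ} {ν : Measure (EuclideanSpace ℝ (Fin L))} [IsFiniteMeasure ν]
    (h : Integrable (fun t => ‖t‖ ^ 2) ν) (b : EuclideanSpace ℝ (Fin L)) :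
    Integrable (fun t => ‖t - b‖ ^ 2) ν := by
  refine Integrable.mono' ((h.const_mul 2).add (integrable_const (2 * ‖b‖ ^ 2))) ?_ ?_
  · exact (((continuous_id.sub continuous_const).norm.pow 2)).aestronglyMeasurable
  · filter_upwards with t
    have h1 : ‖t - b‖ ≤ ‖t‖ + ‖b‖ := norm_sub_le _ _
    have h2 : (0:ℝ) ≤ ‖t - b‖ := norm_nonneg _
    simp only [Pi.add_apply]
    rw [Real.norm_eq_abs, abs_of_nonneg (sq_nonneg _)]
    nlinarith [sq_nonneg (‖t‖ - ‖b‖), norm_nonneg t, norm_nonneg b]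

private lemma int_id {L : ℕ} {ν : Measure (EuclideanSpace ℝ (Fin L))} [IsFiniteMeasure ν]
    (h : Integrable (fun t => ‖t‖ ^ 2) ν) :
    Integrable (fun t : EuclideanSpace ℝ (Fin L) => t) ν := by
  refine Integrable.mono' (h.add (integrable_const 1)) continuous_id.aestronglyMeasurable ?_
  filter_upwards with t
  have := norm_nonneg t
  simp only [Pi.add_apply]
  nlinarith

private lemma decomp {L : ℕ} {ν : Measure (EuclideanSpace ℝ (Fin L))} [IsFiniteMeasure ν]
    (h2 : Integrable (fun t => ‖t‖ ^ 2) ν) (m b : EuclideanSpace ℝ (Fin L))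
    (hm : ∫ t, t ∂ν = ((ν Set.univ).toReal) • m) :
    ∫ t, ‖t - b‖ ^ 2 ∂ν = (∫ t, ‖t - m‖ ^ 2 ∂ν) + (ν Set.univ).toReal * ‖m - b‖ ^ 2 := by
  have hid := int_id h2
  have hsub : Integrable (fun t => t - m) ν := hid.sub (integrable_const m)
  have hker : ∫ t, t - m ∂ν = 0 := by
    rw [integral_sub hid (integrable_const m), integral_const, hm]
    exact sub_self _
  have hcross : Integrable (fun t => (inner ℝ (m - b) (t - m) : ℝ)) ν := hsub.const_inner _
  have key : ∀ t : EuclideanSpace ℝ (Fin L),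
      ‖t - b‖ ^ 2 = ‖t - m‖ ^ 2 + (2 * inner ℝ (m - b) (t - m) + ‖m - b‖ ^ 2) := by
    intro t
    have ht : t - b = (t - m) + (m - b) := by abel
    rw [ht, norm_add_sq_real, real_inner_comm]
    ring
  calc ∫ t, ‖t - b‖ ^ 2 ∂ν
      = ∫ t, (‖t - m‖ ^ 2 + (2 * inner ℝ (m - b) (t - m) + ‖m - b‖ ^ 2)) ∂ν :=
        integral_congr_ae (Filter.Eventually.of_forall key)
    _ = (∫ t, ‖t - m‖ ^ 2 ∂ν) + (∫ t, (2 * inner ℝ (m - b) (t - m) + ‖m - b‖ ^ 2) ∂ν) :=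
        integral_add (int_sq h2 m) ((hcross.const_mul 2).add (integrable_const _))
    _ = _ := by
        rw [integral_add (hcross.const_mul 2) (integrable_const _), integral_const_mul,
          integral_inner hsub, hker, inner_zero_right, integral_const, smul_eq_mul]
        simp only [Measure.real]
        ring

/-- For `β_κ = (1−κ)·αC + κ·αpool`, the inequality
`E_{μ₀,C}[‖t−β_κ‖²] ≤ ∫ ‖t−β_κ‖² dμ₀` holds iff
`(2κ − 1)·‖αC − αpool‖² ≤ Tr_{μ₀} − Tr_{μ₀,C}`. -/
theorem regularity_criterion_iff
    {L : ℕ} (μ₀ : Measure (EuclideanSpace ℝ (Fin L)))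
    [IsProbabilityMeasure μ₀]
    (hL2 : Integrable (fun t => ‖t‖ ^ 2) μ₀)
    (C : Set (EuclideanSpace ℝ (Fin L))) (hCmeas : MeasurableSet C)
    (hC : 0 < μ₀ C)
    (κ : ℝ)
    (αC αpool : EuclideanSpace ℝ (Fin L))
    (hαC : αC = ((μ₀ C).toReal)⁻¹ • ∫ t in C, t ∂μ₀)
    (hαpool : αpool = ∫ t, t ∂μ₀)
    (Trμ TrC : ℝ)
    (hTrμ : Trμ = ∫ t, ‖t - αpool‖ ^ 2 ∂μ₀)
    (hTrC : TrC = ((μ₀ C).toReal)⁻¹ * ∫ t in C, ‖t - αC‖ ^ 2 ∂μ₀)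
    (β : EuclideanSpace ℝ (Fin L))
    (hβ : β = (1 - κ) • αC + κ • αpool) :
    ((μ₀ C).toReal)⁻¹ * (∫ t in C, ‖t - β‖ ^ 2 ∂μ₀) ≤ ∫ t, ‖t - β‖ ^ 2 ∂μ₀ ↔
      (2 * κ - 1) * ‖αC - αpool‖ ^ 2 ≤ Trμ - TrC := by
  set c : ℝ := (μ₀ C).toReal with hcdef
  have hCne : μ₀ C ≠ ⊤ := measure_ne_top _ _
  have hc : 0 < c := ENNReal.toReal_pos hC.ne' hCne
  have hunivC : (μ₀.restrict C) Set.univ = μ₀ C := by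
    simp [Measure.restrict_apply_univ]
  have hL2C : Integrable (fun t => ‖t‖ ^ 2) (μ₀.restrict C) := hL2.restrict
  -- decomposition for the restricted measure
  have hmC : ∫ t, t ∂(μ₀.restrict C) = (((μ₀.restrict C) Set.univ).toReal) • αC := by
    rw [hunivC, hαC, smul_smul, mul_inv_cancel₀ hc.ne', one_smul]
  have hdC := decomp hL2C αC β hmC
  rw [hunivC] at hdC
  -- decomposition for the full measure
  have hmP : ∫ t, t ∂μ₀ = ((μ₀ Set.univ).toReal) • αpool := by
    simp [hαpool]
  have hdP := decomp hL2 αpool β hmP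
  rw [measure_univ] at hdP
  simp only [ENNReal.toReal_one, one_mul] at hdP
  -- norms of the differences
  have hβC : αC - β = κ • (αC - αpool) := by
    rw [hβ]; module
  have hβP : αpool - β = (1 - κ) • (αpool - αC) := by
    rw [hβ]; module
  have hnC : ‖αC - β‖ ^ 2 = κ ^ 2 * ‖αC - αpool‖ ^ 2 := by
    rw [hβC, norm_smul, Real.norm_eq_abs, mul_pow, sq_abs]
  have hnP : ‖αpool - β‖ ^ 2 = (1 - κ) ^ 2 * ‖αC - αpool‖ ^ 2 := by
    rw [hβP, norm_smul, Real.norm_eq_abs, mul_pow, sq_abs, norm_sub_rev]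
  rw [hdC, hdP, hTrμ, hTrC, hnC, hnP]
  rw [mul_add, ← mul_assoc, inv_mul_cancel₀ hc.ne', one_mul]
  constructor <;> intro h <;> nlinarith [sq_nonneg ‖αC - αpool‖]
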